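/- Define △(N, α) = −8α² − (24N − 16)α + 9N² − 84N + 100 for real N and α. Then: (i) for every natural number N with 2 ≤ N ≤ 7 and every real α ≥ 0, △(N, α) < 0; (ii) for every natural number N ≥ 8, the number α** = (4 − 6N + 3√6 (N − 2))/4 satisfies α** ≥ 0, and for every real α ≥ 0 one has △(N, α) ≥ 0 if and only if α ≤ α**. (The identity (24N−16)² + 32(9N²−84N+100) = 864(N−2)² underlies the explicit formula for α**.) -/
import Mathlib


/-- The discriminant quantity `△(N, α) = −8α² − (24N − 16)α + 9N² − 84N + 100`. -/
noncomputable def discr (N α : ℝ) : ℝ :=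
  -8 * α ^ 2 - (24 * N - 16) * α + 9 * N ^ 2 - 84 * N + 100

theorem discriminant_sign :
    (∀ N : ℕ, 2 ≤ N → N ≤ 7 → ∀ α : ℝ, 0 ≤ α → discr N α < 0) ∧
    (∀ N : ℕ, 8 ≤ N →
      0 ≤ (4 - 6 * (N : ℝ) + 3 * Real.sqrt 6 * ((N : ℝ) - 2)) / 4 ∧
      ∀ α : ℝ, 0 ≤ α →
        (0 ≤ discr N α ↔
          α ≤ (4 - 6 * (N : ℝ) + 3 * Real.sqrt 6 * ((N : ℝ) - 2)) / 4)) := by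
  constructor
  · intro N h2 h7 α hα
    have h2' : (2 : ℝ) ≤ N := by exact_mod_cast h2
    have h7' : (N : ℝ) ≤ 7 := by exact_mod_cast h7
    have hval : 9 * (N : ℝ) ^ 2 - 84 * N + 100 < 0 := by nlinarith
    have : 0 ≤ (24 * (N : ℝ) - 16) * α := by nlinarith
    unfold discr; nlinarith [sq_nonneg α]
  · intro N h8
    have h8' : (8 : ℝ) ≤ N := by exact_mod_cast h8
    set s := Real.sqrt 6 with hsdef
    have hs2 : s ^ 2 = 6 := Real.sq_sqrt (by norm_num)
    have hs0 : 0 ≤ s := Real.sqrt_nonneg 6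
    have hs22 : (22 : ℝ) / 9 ≤ s := by nlinarith
    have hstar : 0 ≤ (4 - 6 * (N : ℝ) + 3 * s * ((N : ℝ) - 2)) / 4 := by nlinarith
    refine ⟨hstar, fun α hα => ?_⟩
    set n : ℝ := (N : ℝ)
    have hfac : discr n α
        = -8 * (α - (4 - 6 * n + 3 * s * (n - 2)) / 4)
            * (α - (4 - 6 * n - 3 * s * (n - 2)) / 4) := by
      unfold discr; nlinarith [hs2]
    have hneg : (4 - 6 * n - 3 * s * (n - 2)) / 4 < 0 := by nlinarith
    constructor
    · intro hd
      by_contra hc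
      push_neg at hc
      have h1 : 0 < α - (4 - 6 * n + 3 * s * (n - 2)) / 4 := by linarith
      have h2 : 0 < α - (4 - 6 * n - 3 * s * (n - 2)) / 4 := by linarith
      nlinarith [mul_pos h1 h2, hfac]
    · intro hle
      have h1 : α - (4 - 6 * n + 3 * s * (n - 2)) / 4 ≤ 0 := by linarith
      have h2 : 0 ≤ α - (4 - 6 * n - 3 * s * (n - 2)) / 4 := by linarith
      nlinarith [mul_nonneg (neg_nonneg.mpr h1) h2, hfac]
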